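/- Let J ≥ 2 be an integer and let P be a Borel probability measure on ℝ × Fin J × Fin J, with coordinates written (Y, D, Z). Assume: (i) P(Z = z) > 0 for every z ∈ Fin J; (ii) for every family of Borel sets B : Fin J → Fin J → Set ℝ such that for each j the sets B j z for z ≠ j are pairwise disjoint with union ℝ, one has ∑_{j ∈ Fin J} ∑_{z ≠ j} P(Y ∈ B j z, D = j, Z = z) / P(Z = z) ≤ 1 (division taken in [0,∞]); and (iii) for every Borel set B ⊆ ℝ and all j, k ∈ Fin J with k ≠ j, P(Y ∈ B, D = j, Z = k) / P(Z = k) ≤ P(Y ∈ B, D = j, Z = j) / P(Z = j). Then there exists a probability measure μ on (Fin J → ℝ) × (Fin J → Fin J) such that for μ-almost every (y, d) the map d has a default choice, and the pushforward of the product measure μ ⊗ ν under the map ((y, d), z) ↦ (y (d z), d z, z) equals P, where ν is the marginal distribution of P in the Z-coordinate. -/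

import Mathlib

set_option linter.unusedSectionVars false
set_option linter.unnecessarySimpa false
set_option maxHeartbeats 1000000

open MeasureTheory ENNReal Finset

namespace Stmt12

lemma filter_powerset_not_mem {α : Type*} [DecidableEq α] (T : Finset α) (z : α) :
    T.powerset.filter (fun S => z ∉ S) = (T.erase z).powerset := by
  ext S
  simp [Finset.mem_powerset, Finset.subset_erase, and_comm]

variable {J : ℕ} (P : Measure (ℝ × Fin J × Fin J)) [IsFiniteMeasure P]

noncomputable section

/-- Marginal probability of `Z = z`. -/
def nu (z : Fin J) : ℝ≥0∞ := P {x | x.2.2 = z}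

lemma measurableSet_Z (z : Fin J) :
    MeasurableSet {x : ℝ × Fin J × Fin J | x.2.2 = z} :=
  measurable_snd.snd (measurableSet_singleton z)

lemma measurableSet_DZ (j z : Fin J) :
    MeasurableSet {x : ℝ × Fin J × Fin J | x.2.1 = j ∧ x.2.2 = z} :=
  (measurable_snd.fst (measurableSet_singleton j)).inter
    (measurable_snd.snd (measurableSet_singleton z))

/-- Conditional distribution of `Y` on `D = j` given `Z = z`. -/
def Q (j z : Fin J) : Measure ℝ :=
  (nu P z)⁻¹ • (P.restrict {x | x.2.1 = j ∧ x.2.2 = z}).map Prod.fst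

lemma Q_apply (j z : Fin J) {B : Set ℝ} (hB : MeasurableSet B) :
    Q P j z B = P {x | x.1 ∈ B ∧ x.2.1 = j ∧ x.2.2 = z} / nu P z := by
  rw [Q, Measure.smul_apply, smul_eq_mul,
    Measure.map_apply measurable_fst hB,
    Measure.restrict_apply (measurable_fst hB), div_eq_mul_inv, mul_comm]
  rfl

instance (j z : Fin J) : IsFiniteMeasure (Q P j z) := by
  constructor
  have hle : ((P.restrict {x | x.2.1 = j ∧ x.2.2 = z}).map Prod.fst) Set.univ
      ≤ nu P z := by
    rw [Measure.map_apply measurable_fst MeasurableSet.univ, Set.preimage_univ,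
      Measure.restrict_apply MeasurableSet.univ, Set.univ_inter]
    exact measure_mono fun x hx => hx.2
  rw [Q, Measure.smul_apply, smul_eq_mul]
  rcases eq_or_ne (nu P z) 0 with h | h
  · have h0 : ((P.restrict {x | x.2.1 = j ∧ x.2.2 = z}).map Prod.fst) Set.univ = 0 :=
      le_antisymm (h ▸ hle) (zero_le)
    simp [h0]
  · exact ENNReal.mul_lt_top (ENNReal.inv_lt_top.mpr (pos_iff_ne_zero.mpr h))
      (lt_of_le_of_lt hle (measure_lt_top _ _))

/-- Base measure for `Radon-Nikodym` densities: sum of all conditionals with `D = j`. -/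
def lam (j : Fin J) : Measure ℝ := ∑ w : Fin J, Q P j w

instance (j : Fin J) : IsFiniteMeasure (lam P j) := by
  constructor
  rw [lam, Measure.finset_sum_apply]
  exact ENNReal.sum_lt_top.mpr fun w _ => measure_lt_top _ _

/-- Densities of the conditionals. -/
def g (j w : Fin J) : ℝ → ℝ≥0∞ := (Q P j w).rnDeriv (lam P j)

lemma measurable_g (j w : Fin J) : Measurable (g P j w) :=
  Measure.measurable_rnDeriv _ _

lemma Q_le_lam (j w : Fin J) : Q P j w ≤ lam P j := by
  rw [Measure.le_iff]
  intro s hs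
  rw [lam, Measure.finset_sum_apply]
  exact Finset.single_le_sum (f := fun w => Q P j w s) (fun i _ => zero_le) (mem_univ w)

lemma Q_eq (j w : Fin J) : (lam P j).withDensity (g P j w) = Q P j w :=
  Measure.withDensity_rnDeriv_eq _ _ (Q_le_lam P j w).absolutelyContinuous

/-- Pointwise max of the densities over `w ≠ j`. -/
def gmax (j : Fin J) : ℝ → ℝ≥0∞ := fun y => (univ.erase j).sup fun w => g P j w y

lemma measurable_gmax (j : Fin J) : Measurable (gmax P j) := by
  classical
  have : ∀ s : Finset (Fin J), Measurable fun y => s.sup fun w => g P j w y := by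
    intro s
    induction s using Finset.induction with
    | empty => simpa using measurable_const
    | insert _ _ _ ih =>
        simp only [Finset.sup_insert]
        exact (measurable_g P j _).sup ih
  exact this _

lemma g_le_gmax (j : Fin J) {w : Fin J} (hw : w ∈ univ.erase j) (y : ℝ) :
    g P j w y ≤ gmax P j y :=
  Finset.le_sup (f := fun w => g P j w y) hw

/-- Conditional "non-compliance probability" densities. -/
def f (j w : Fin J) : ℝ → ℝ≥0∞ := fun y => g P j w y / gmax P j y

lemma measurable_f (j w : Fin J) : Measurable (f P j w) :=
  (measurable_g P j w).div (measurable_gmax P j)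

lemma f_le_one (j : Fin J) {w : Fin J} (hw : w ∈ univ.erase j) (y : ℝ) :
    f P j w y ≤ 1 :=
  ENNReal.div_le_of_le_mul (by simpa using g_le_gmax P j hw y)

lemma gmax_mul_f (j : Fin J) {w : Fin J} (hw : w ∈ univ.erase j) (y : ℝ)
    (htop : gmax P j y ≠ ∞) : gmax P j y * f P j w y = g P j w y := by
  rcases eq_or_ne (gmax P j y) 0 with h0 | h0
  · have : g P j w y = 0 := le_antisymm (h0 ▸ g_le_gmax P j hw y) (zero_le)
    simp [f, h0, this]
  · rw [f, mul_comm, ENNReal.div_mul_cancel h0 htop]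

/-- Density of the type `(default j, compliance set S)`. -/
def h (j : Fin J) (S : Finset (Fin J)) : ℝ → ℝ≥0∞ :=
  fun y => gmax P j y * ((∏ w ∈ univ.erase j \ S, f P j w y) * ∏ w ∈ S, (1 - f P j w y))

lemma measurable_h (j : Fin J) (S : Finset (Fin J)) : Measurable (h P j S) :=
  (measurable_gmax P j).mul
    ((Finset.measurable_prod _ fun w _ => measurable_f P j w).mul
      (Finset.measurable_prod _ fun w _ => measurable_const.sub (measurable_f P j w)))

lemma h_le_gmax (j : Fin J) (S : Finset (Fin J)) (y : ℝ) : h P j S y ≤ gmax P j y := by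
  rw [h]
  calc gmax P j y * ((∏ w ∈ univ.erase j \ S, f P j w y) * ∏ w ∈ S, (1 - f P j w y))
      ≤ gmax P j y * (1 * 1) := by
        gcongr with w hw
        · exact Finset.prod_le_one (fun w hw => zero_le)
            (fun w hw => f_le_one P j (Finset.mem_sdiff.mp hw).1 y)
        · exact Finset.prod_le_one (fun w hw => zero_le) (fun w hw => tsub_le_self)
    _ = gmax P j y := by ring

lemma sum_aux (j : Fin J) (U : Finset (Fin J)) (hU : U ⊆ univ.erase j) (y : ℝ) :
    ∑ S ∈ U.powerset, (∏ w ∈ U \ S, f P j w y) * ∏ w ∈ S, (1 - f P j w y) = 1 := by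
  have : ∑ S ∈ U.powerset, (∏ w ∈ S, (1 - f P j w y)) * ∏ w ∈ U \ S, f P j w y
      = ∏ w ∈ U, ((1 - f P j w y) + f P j w y) := (Finset.prod_add _ _ U).symm
  rw [Finset.sum_congr rfl (fun S _ => mul_comm _ _), this]
  exact Finset.prod_eq_one fun w hw => tsub_add_cancel_of_le (f_le_one P j (hU hw) y)

lemma sum_h_powerset (j : Fin J) (y : ℝ) :
    ∑ S ∈ (univ.erase j).powerset, h P j S y = gmax P j y := by
  simp only [h]
  rw [← Finset.mul_sum, sum_aux P j _ (Finset.Subset.refl _) y, mul_one]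

lemma sum_h_erase (j z : Fin J) (hz : z ∈ univ.erase j) (y : ℝ)
    (htop : gmax P j y ≠ ∞) :
    ∑ S ∈ ((univ.erase j).erase z).powerset, h P j S y = g P j z y := by
  classical
  have key : ∀ S ∈ ((univ.erase j).erase z).powerset, h P j S y
      = (gmax P j y * f P j z y) *
        ((∏ w ∈ (univ.erase j).erase z \ S, f P j w y) * ∏ w ∈ S, (1 - f P j w y)) := by
    intro S hS
    rw [Finset.mem_powerset] at hS
    have hzS : z ∉ S := fun hzS => (Finset.mem_erase.mp (hS hzS)).1 rfl
    have hzTS : z ∈ univ.erase j \ S := Finset.mem_sdiff.mpr ⟨hz, hzS⟩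
    have hsplit : ∏ w ∈ univ.erase j \ S, f P j w y
        = f P j z y * ∏ w ∈ (univ.erase j \ S).erase z, f P j w y :=
      (Finset.mul_prod_erase _ _ hzTS).symm
    have he : (univ.erase j \ S).erase z = (univ.erase j).erase z \ S := by
      rw [← Finset.erase_sdiff_comm]
    rw [h, hsplit, he]
    ring
  rw [Finset.sum_congr rfl key, ← Finset.mul_sum,
    sum_aux P j _ ((Finset.erase_subset _ _ : (univ.erase j).erase z ⊆ univ.erase j)) y,
    mul_one, gmax_mul_f P j hz y htop]

lemma gmax_ae_ne_top (j : Fin J) : ∀ᵐ y ∂(lam P j), gmax P j y ≠ ∞ := by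
  have hall : ∀ᵐ y ∂(lam P j), ∀ w : Fin J, g P j w y < ∞ :=
    ae_all_iff.mpr fun w => Measure.rnDeriv_lt_top (Q P j w) (lam P j)
  filter_upwards [hall] with y hy
  exact ne_of_lt ((Finset.sup_lt_iff (by simp : (⊥ : ℝ≥0∞) < ∞)).mpr fun w _ => hy w)

lemma lintegral_gmax_lt_top (j : Fin J) : ∫⁻ y, gmax P j y ∂(lam P j) < ∞ := by
  have hle : ∀ y, gmax P j y ≤ ∑ w ∈ univ.erase j, g P j w y := fun y =>
    Finset.sup_le fun w hw =>
      Finset.single_le_sum (f := fun w => g P j w y) (fun i _ => zero_le) hw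
  calc ∫⁻ y, gmax P j y ∂(lam P j) ≤ ∫⁻ y, ∑ w ∈ univ.erase j, g P j w y ∂(lam P j) :=
        lintegral_mono hle
    _ = ∑ w ∈ univ.erase j, ∫⁻ y, g P j w y ∂(lam P j) :=
        lintegral_finset_sum _ fun w _ => measurable_g P j w
    _ < ∞ := ENNReal.sum_lt_top.mpr fun w _ => Measure.lintegral_rnDeriv_lt_top _ _

/-- The measure of "defaulters to `j`", with the distribution of `y j`. -/
def Mz (j : Fin J) : Measure ℝ := (lam P j).withDensity (gmax P j)

instance (j : Fin J) : IsFiniteMeasure (Mz P j) := by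
  constructor
  rw [Mz, withDensity_apply _ MeasurableSet.univ, setLIntegral_univ]
  exact lintegral_gmax_lt_top P j

/-- The residual measure at `z` (distribution of `y z` for compliers at `z`). -/
def rho (z : Fin J) : Measure ℝ :=
  (lam P z).withDensity (fun y => g P z z y - gmax P z y)

lemma rho_univ_lt_top (z : Fin J) : rho P z Set.univ < ∞ := by
  rw [rho, withDensity_apply _ MeasurableSet.univ, setLIntegral_univ]
  calc ∫⁻ y, (g P z z y - gmax P z y) ∂(lam P z)
      ≤ ∫⁻ y, g P z z y ∂(lam P z) := lintegral_mono fun y => tsub_le_self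
    _ < ∞ := Measure.lintegral_rnDeriv_lt_top _ _

open scoped Classical in
/-- Normalised residual distribution. -/
def R (z : Fin J) : Measure ℝ :=
  if rho P z = 0 then Measure.dirac 0 else (rho P z Set.univ)⁻¹ • rho P z

instance (z : Fin J) : IsProbabilityMeasure (R P z) := by
  rw [R]
  split_ifs with hz
  · infer_instance
  · constructor
    rw [Measure.smul_apply, smul_eq_mul]
    exact ENNReal.inv_mul_cancel (fun h => hz (Measure.measure_univ_eq_zero.mp h))
      (rho_univ_lt_top P z).ne

lemma R_mul_rho_univ (z : Fin J) (B : Set ℝ) :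
    R P z B * rho P z Set.univ = rho P z B := by
  rw [R]
  split_ifs with hz
  · simp [hz]
  · rw [Measure.smul_apply, smul_eq_mul, mul_comm, ← mul_assoc,
      ENNReal.mul_inv_cancel (fun h => hz (Measure.measure_univ_eq_zero.mp h))
        (rho_univ_lt_top P z).ne, one_mul]

/-- Mass of the full-complier component. -/
def wc : ℝ≥0∞ := 1 - ∑ j : Fin J, Mz P j Set.univ

/-- Potential treatments of a defaulter to `j` complying on `S`. -/
def dmap (j : Fin J) (S : Finset (Fin J)) : Fin J → Fin J := fun z => if z ∈ S then z else j

/-- Coordinate measures for the potential outcomes of type `(j, S)`. -/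
def Ycoord (j : Fin J) (S : Finset (Fin J)) : Fin J → Measure ℝ := fun i =>
  if i = j then (lam P j).withDensity (h P j S) else if i ∈ S then R P i else Measure.dirac 0

instance (j : Fin J) (S : Finset (Fin J)) (i : Fin J) : IsFiniteMeasure (Ycoord P j S i) := by
  rw [Ycoord]
  split_ifs with h1 h2
  · constructor
    rw [withDensity_apply _ MeasurableSet.univ, setLIntegral_univ]
    exact lt_of_le_of_lt (lintegral_mono (h_le_gmax P j S)) (lintegral_gmax_lt_top P j)
  · infer_instance
  · infer_instance

/-- Potential-outcome distribution of type `(j, S)` (not normalised). -/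
def Ymeas (j : Fin J) (S : Finset (Fin J)) : Measure (Fin J → ℝ) :=
  Measure.pi (Ycoord P j S)

/-- Potential-outcome distribution of full compliers. -/
def Cmeas : Measure (Fin J → ℝ) := Measure.pi (fun z => R P z)

/-- The constructed joint distribution of potential outcomes and treatments. -/
def mu : Measure ((Fin J → ℝ) × (Fin J → Fin J)) :=
  (∑ j : Fin J, ∑ S ∈ (univ.erase j).powerset,
      (Ymeas P j S).prod (Measure.dirac (dmap j S)))
  + wc P • (Cmeas P).prod (Measure.dirac id)

lemma L1 (j : Fin J) {B : Set ℝ} (hB : MeasurableSet B) :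
    ∑ S ∈ (univ.erase j).powerset, (lam P j).withDensity (h P j S) B = Mz P j B := by
  simp only [withDensity_apply _ hB, Mz]
  rw [← lintegral_finset_sum _ fun S _ => measurable_h P j S]
  exact lintegral_congr fun y => sum_h_powerset P j y

lemma L2 (j z : Fin J) (hz : z ∈ univ.erase j) {B : Set ℝ} (hB : MeasurableSet B) :
    ∑ S ∈ ((univ.erase j).erase z).powerset, (lam P j).withDensity (h P j S) B
      = Q P j z B := by
  simp only [withDensity_apply _ hB]
  rw [← lintegral_finset_sum _ fun S _ => measurable_h P j S, ← Q_eq P j z,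
    withDensity_apply _ hB]
  apply lintegral_congr_ae
  filter_upwards [ae_restrict_of_ae (gmax_ae_ne_top P j)] with y hy
  exact sum_h_erase P j z hz y hy

lemma L3 (j z : Fin J) (hz : z ∈ univ.erase j) :
    Q P j z Set.univ
      + ∑ S ∈ (univ.erase j).powerset.filter (fun S => z ∈ S),
          (lam P j).withDensity (h P j S) Set.univ
      = Mz P j Set.univ := by
  have hsplit := Finset.sum_filter_add_sum_filter_not (univ.erase j).powerset
    (fun S => z ∈ S) (fun S => (lam P j).withDensity (h P j S) Set.univ)
  rw [filter_powerset_not_mem, L2 P j z hz MeasurableSet.univ] at hsplit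
  rw [add_comm, hsplit, L1 P j MeasurableSet.univ]

lemma pi_eval (κ : Fin J → Measure ℝ) [∀ i, IsFiniteMeasure (κ i)] (j : Fin J)
    (B : Set ℝ) :
    Measure.pi κ ((fun y => y j) ⁻¹' B) = κ j B * ∏ i ∈ univ.erase j, κ i Set.univ := by
  classical
  have hset : ((fun y : Fin J → ℝ => y j) ⁻¹' B)
      = Set.pi Set.univ (fun i => if i = j then B else Set.univ) := by
    ext y
    simp only [Set.mem_preimage, Set.mem_pi, Set.mem_univ, true_implies]
    constructor
    · intro hy i
      by_cases hij : i = j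
      · subst hij; simpa using hy
      · simp [hij]
    · intro hy
      simpa using hy j
  rw [hset, Measure.pi_pi, ← Finset.mul_prod_erase Finset.univ _ (Finset.mem_univ j)]
  congr 1
  · simp
  · exact Finset.prod_congr rfl fun i hi => by simp [(Finset.mem_erase.mp hi).1]

lemma Ycoord_univ_one (j : Fin J) (S : Finset (Fin J)) {i : Fin J} (hij : i ≠ j) :
    Ycoord P j S i Set.univ = 1 := by
  rw [Ycoord, if_neg hij]
  split_ifs
  · exact measure_univ
  · exact measure_univ

lemma Ymeas_eval_default (j : Fin J) (S : Finset (Fin J)) (B : Set ℝ) :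
    Ymeas P j S ((fun y => y j) ⁻¹' B) = (lam P j).withDensity (h P j S) B := by
  rw [Ymeas, pi_eval _ j B,
    Finset.prod_eq_one (fun i hi => Ycoord_univ_one P j S (Finset.mem_erase.mp hi).1),
    mul_one, Ycoord, if_pos rfl]

lemma Ymeas_eval_other (j : Fin J) (S : Finset (Fin J)) {z : Fin J} (hzj : z ≠ j)
    (hzS : z ∈ S) (B : Set ℝ) :
    Ymeas P j S ((fun y => y z) ⁻¹' B)
      = R P z B * (lam P j).withDensity (h P j S) Set.univ := by
  rw [Ymeas, pi_eval _ z B,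
    Finset.prod_eq_single_of_mem j
      (Finset.mem_erase.mpr ⟨fun hjz => hzj hjz.symm, Finset.mem_univ j⟩)
      (fun i _ hij => Ycoord_univ_one P j S hij)]
  congr 1
  · rw [Ycoord, if_neg hzj, if_pos hzS]
  · rw [Ycoord, if_pos rfl]

lemma Cmeas_eval (z : Fin J) (B : Set ℝ) :
    Cmeas P ((fun y => y z) ⁻¹' B) = R P z B := by
  rw [Cmeas, pi_eval _ z B, Finset.prod_eq_one (fun i _ => measure_univ), mul_one]

lemma prod_dirac_apply (ρm : Measure (Fin J → ℝ)) (d₀ : Fin J → Fin J)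
    (A : Set (Fin J → ℝ)) (D : Set (Fin J → Fin J)) [Decidable (d₀ ∈ D)] :
    (ρm.prod (Measure.dirac d₀)) (A ×ˢ D) = ρm A * (if d₀ ∈ D then 1 else 0) := by
  rw [Measure.prod_prod, Measure.dirac_apply' _ (Set.to_countable D).measurableSet]
  congr 1
  rw [Set.indicator_apply]
  split_ifs <;> rfl

lemma sum_Q_univ (hpos : ∀ z : Fin J, 0 < P {x | x.2.2 = z}) (z : Fin J) :
    ∑ j : Fin J, Q P j z Set.univ = 1 := by
  have key : ∀ j : Fin J, Q P j z Set.univ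
      = P {x | x.2.1 = j ∧ x.2.2 = z} * (nu P z)⁻¹ := by
    intro j
    rw [Q_apply P j z MeasurableSet.univ, div_eq_mul_inv]
    congr 2
    ext x
    simp
  simp only [key]
  rw [← Finset.sum_mul]
  have hU : {x : ℝ × Fin J × Fin J | x.2.2 = z}
      = ⋃ j ∈ (Finset.univ : Finset (Fin J)), {x | x.2.1 = j ∧ x.2.2 = z} := by
    ext x
    simp
  have hsum : ∑ j : Fin J, P {x | x.2.1 = j ∧ x.2.2 = z} = nu P z := by
    rw [nu, hU]
    rw [measure_biUnion_finset]
    · intro a _ b _ hab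
      rw [Function.onFun, Set.disjoint_left]
      rintro x ⟨ha, -⟩ ⟨hb, -⟩
      exact hab (ha ▸ hb ▸ rfl)
    · exact fun j _ => measurableSet_DZ j z
  rw [hsum]
  exact ENNReal.mul_inv_cancel (hpos z).ne' (measure_ne_top _ _)

lemma setLIntegral_g_eq (j w : Fin J) {s : Set ℝ} (hs : MeasurableSet s) :
    ∫⁻ y in s, g P j w y ∂(lam P j) = Q P j w s := by
  rw [← Q_eq P j w, withDensity_apply _ hs]

lemma gmax_le_ae (hineqB : ∀ B : Set ℝ, MeasurableSet B → ∀ j k : Fin J, k ≠ j →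
      P {x : ℝ × Fin J × Fin J | x.1 ∈ B ∧ x.2.1 = j ∧ x.2.2 = k}
          / P {x : ℝ × Fin J × Fin J | x.2.2 = k}
        ≤ P {x : ℝ × Fin J × Fin J | x.1 ∈ B ∧ x.2.1 = j ∧ x.2.2 = j}
          / P {x : ℝ × Fin J × Fin J | x.2.2 = j})
    (j : Fin J) : ∀ᵐ y ∂(lam P j), gmax P j y ≤ g P j j y := by
  have hw : ∀ w ∈ univ.erase j, ∀ᵐ y ∂(lam P j), g P j w y ≤ g P j j y := by
    intro w hw
    apply ae_le_of_forall_setLIntegral_le_of_sigmaFinite (measurable_g P j w)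
    intro s hs _
    rw [setLIntegral_g_eq P j w hs, setLIntegral_g_eq P j j hs,
      Q_apply P j w hs, Q_apply P j j hs]
    exact hineqB s hs j w (Finset.mem_erase.mp hw).1
  have hall : ∀ᵐ y ∂(lam P j), ∀ w ∈ univ.erase j, g P j w y ≤ g P j j y :=
    (ae_ball_iff ((univ.erase j : Finset (Fin J)) : Set (Fin J)).to_countable).mpr
      (fun w hwmem => hw w hwmem)
  filter_upwards [hall] with y hy
  exact Finset.sup_le fun w hwmem => hy w hwmem

lemma M_add_rho
    (hineqB : ∀ B : Set ℝ, MeasurableSet B → ∀ j k : Fin J, k ≠ j →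
      P {x : ℝ × Fin J × Fin J | x.1 ∈ B ∧ x.2.1 = j ∧ x.2.2 = k}
          / P {x : ℝ × Fin J × Fin J | x.2.2 = k}
        ≤ P {x : ℝ × Fin J × Fin J | x.1 ∈ B ∧ x.2.1 = j ∧ x.2.2 = j}
          / P {x : ℝ × Fin J × Fin J | x.2.2 = j})
    (j : Fin J) {B : Set ℝ} (hB : MeasurableSet B) :
    Mz P j B + rho P j B = Q P j j B := by
  have hadd : (lam P j).withDensity (gmax P j)
        + (lam P j).withDensity (fun y => g P j j y - gmax P j y)
      = (lam P j).withDensity (fun y => gmax P j y + (g P j j y - gmax P j y)) := by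
    rw [← withDensity_add_left (measurable_gmax P j)]
    rfl
  have hcongr : (lam P j).withDensity (fun y => gmax P j y + (g P j j y - gmax P j y))
      = (lam P j).withDensity (g P j j) :=
    withDensity_congr_ae ((gmax_le_ae P hineqB j).mono fun y hy =>
      add_tsub_cancel_of_le hy)
  calc Mz P j B + rho P j B
      = ((lam P j).withDensity (gmax P j)
          + (lam P j).withDensity (fun y => g P j j y - gmax P j y)) B := by
        rw [Measure.add_apply]; rfl
    _ = Q P j j B := by rw [hadd, hcongr, Q_eq]

lemma sumM_le_one (hJ : 2 ≤ J)
    (hineqA : ∀ B : Fin J → Fin J → Set ℝ,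
      (∀ j z, MeasurableSet (B j z)) →
      (∀ j : Fin J, ∀ z ≠ j, ∀ z' ≠ j, z ≠ z' → Disjoint (B j z) (B j z')) →
      (∀ j : Fin J, (⋃ z ∈ ({j}ᶜ : Set (Fin J)), B j z) = Set.univ) →
      ∑ j : Fin J, ∑ z ∈ Finset.univ.erase j,
        P {x : ℝ × Fin J × Fin J | x.1 ∈ B j z ∧ x.2.1 = j ∧ x.2.2 = z}
          / P {x : ℝ × Fin J × Fin J | x.2.2 = z} ≤ 1) :
    ∑ j : Fin J, Mz P j Set.univ ≤ 1 := by
  classical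
  set Bs : Fin J → Fin J → Set ℝ := fun j z =>
    if z = j then ∅
    else {y | g P j z y = gmax P j y
      ∧ ∀ w ∈ Finset.univ.erase j, w < z → g P j w y ≠ gmax P j y} with hBs
  have hmeas : ∀ j z, MeasurableSet (Bs j z) := by
    intro j z
    simp only [hBs]
    split_ifs with hzj
    · exact MeasurableSet.empty
    · have h1 : MeasurableSet {y | g P j z y = gmax P j y} := by
        have := (measurableSet_le (measurable_g P j z) (measurable_gmax P j)).inter
          (measurableSet_le (measurable_gmax P j) (measurable_g P j z))
        convert this using 1
        ext y
        simp only [Set.mem_setOf_eq, Set.mem_inter_iff]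
        exact ⟨fun h => ⟨le_of_eq h, ge_of_eq h⟩, fun h => le_antisymm h.1 h.2⟩
      have h2 : {y | g P j z y = gmax P j y
            ∧ ∀ w ∈ Finset.univ.erase j, w < z → g P j w y ≠ gmax P j y}
          = {y | g P j z y = gmax P j y} ∩
            ⋂ w ∈ ((Finset.univ.erase j).filter (fun w => w < z) : Finset (Fin J)),
              {y | g P j w y = gmax P j y}ᶜ := by
        ext y
        simp only [Set.mem_setOf_eq, Set.mem_inter_iff, Set.mem_iInter, Set.mem_compl_iff,
          Finset.mem_filter]
        constructor
        · rintro ⟨h, hmin⟩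
          exact ⟨h, fun w hw => hmin w hw.1 hw.2⟩
        · rintro ⟨h, hmin⟩
          exact ⟨h, fun w hw hlt => hmin w ⟨hw, hlt⟩⟩
      rw [h2]
      refine h1.inter (MeasurableSet.biInter (Finset.countable_toSet _) fun w _ => ?_)
      have hw1 : MeasurableSet {y | g P j w y = gmax P j y} := by
        have := (measurableSet_le (measurable_g P j w) (measurable_gmax P j)).inter
          (measurableSet_le (measurable_gmax P j) (measurable_g P j w))
        convert this using 1
        ext y
        simp only [Set.mem_setOf_eq, Set.mem_inter_iff]
        exact ⟨fun h => ⟨le_of_eq h, ge_of_eq h⟩, fun h => le_antisymm h.1 h.2⟩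
      exact hw1.compl
  have hdisj : ∀ j : Fin J, ∀ z ≠ j, ∀ z' ≠ j, z ≠ z' → Disjoint (Bs j z) (Bs j z') := by
    have key : ∀ j : Fin J, ∀ z ≠ j, ∀ z' ≠ j, z < z' → Disjoint (Bs j z) (Bs j z') := by
      intro j z hz z' hz' hlt
      rw [Set.disjoint_left]
      intro y hy hy'
      simp only [hBs] at hy hy'
      simp only [if_neg hz, if_neg hz', Set.mem_setOf_eq] at hy hy'
      exact hy'.2 z (Finset.mem_erase.mpr ⟨hz, Finset.mem_univ z⟩) hlt hy.1
    intro j z hz z' hz' hne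
    rcases lt_or_gt_of_ne hne with hlt | hlt
    · exact key j z hz z' hz' hlt
    · exact (key j z' hz' z hz hlt).symm
  have hcover : ∀ j : Fin J, (⋃ z ∈ ({j}ᶜ : Set (Fin J)), Bs j z) = Set.univ := by
    intro j
    ext y
    simp only [Set.mem_iUnion, Set.mem_univ, iff_true, Set.mem_compl_iff,
      Set.mem_singleton_iff]
    have hne : (Finset.univ.erase j).Nonempty := by
      have h0 : (⟨0, by omega⟩ : Fin J) ≠ (⟨1, by omega⟩ : Fin J) := by
        intro h
        simpa using congrArg Fin.val h
      rcases eq_or_ne j ⟨0, by omega⟩ with rfl | hj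
      · exact ⟨_, Finset.mem_erase.mpr ⟨h0.symm, Finset.mem_univ _⟩⟩
      · exact ⟨_, Finset.mem_erase.mpr ⟨hj.symm, Finset.mem_univ _⟩⟩
    obtain ⟨w₀, hw₀, hsup⟩ := Finset.exists_mem_eq_sup (Finset.univ.erase j) hne
      (fun w => g P j w y)
    set A := (Finset.univ.erase j).filter (fun w => g P j w y = gmax P j y) with hA
    have hAne : A.Nonempty := ⟨w₀, Finset.mem_filter.mpr ⟨hw₀, hsup.symm⟩⟩
    set m := A.min' hAne with hm
    have hmA : m ∈ A := A.min'_mem hAne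
    have hmf := Finset.mem_filter.mp hmA
    have hmer := Finset.mem_erase.mp hmf.1
    refine ⟨m, hmer.1, ?_⟩
    simp only [hBs]
    simp only [if_neg hmer.1, Set.mem_setOf_eq]
    refine ⟨hmf.2, fun w hw hlt heq => ?_⟩
    have : m ≤ w := A.min'_le w (Finset.mem_filter.mpr ⟨hw, heq⟩)
    exact absurd (lt_of_lt_of_le hlt this) (lt_irrefl w)
  have happ := hineqA Bs hmeas hdisj hcover
  have hterm : ∀ j : Fin J, ∀ z ∈ Finset.univ.erase j,
      P {x : ℝ × Fin J × Fin J | x.1 ∈ Bs j z ∧ x.2.1 = j ∧ x.2.2 = z}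
          / P {x : ℝ × Fin J × Fin J | x.2.2 = z} = Mz P j (Bs j z) := by
    intro j z hz
    have hnu : P {x : ℝ × Fin J × Fin J | x.2.2 = z} = nu P z := rfl
    rw [hnu, ← Q_apply P j z (hmeas j z), ← setLIntegral_g_eq P j z (hmeas j z), Mz,
      withDensity_apply _ (hmeas j z)]
    apply setLIntegral_congr_fun (hmeas j z)
    intro y hy
    simp only [hBs] at hy
    simp only [if_neg (Finset.mem_erase.mp hz).1, Set.mem_setOf_eq] at hy
    exact hy.1
  have hMsum : ∀ j : Fin J, ∑ z ∈ Finset.univ.erase j, Mz P j (Bs j z)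
      = Mz P j Set.univ := by
    intro j
    rw [← measure_biUnion_finset]
    · congr 1
      rw [← hcover j]
      ext y
      simp only [Set.mem_iUnion, Finset.mem_coe, Finset.mem_erase, Set.mem_compl_iff,
        Set.mem_singleton_iff]
      constructor
      · rintro ⟨z, ⟨hz, -⟩, hy⟩
        exact ⟨z, hz, hy⟩
      · rintro ⟨z, hz, hy⟩
        exact ⟨z, ⟨hz, Finset.mem_univ z⟩, hy⟩
    · intro a ha b hb hab
      exact hdisj j a (Finset.mem_erase.mp (Finset.mem_coe.mp ha)).1
        b (Finset.mem_erase.mp (Finset.mem_coe.mp hb)).1 hab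
    · exact fun z _ => hmeas j z
  calc ∑ j : Fin J, Mz P j Set.univ
      = ∑ j : Fin J, ∑ z ∈ Finset.univ.erase j,
          P {x : ℝ × Fin J × Fin J | x.1 ∈ Bs j z ∧ x.2.1 = j ∧ x.2.2 = z}
            / P {x : ℝ × Fin J × Fin J | x.2.2 = z} := by
        refine Finset.sum_congr rfl fun j _ => ?_
        rw [Finset.sum_congr rfl (hterm j), hMsum j]
    _ ≤ 1 := happ

lemma dmap_self (j : Fin J) (S : Finset (Fin J)) : dmap j S j = j := by
  rw [dmap]
  split_ifs <;> rfl

lemma dmap_eq_iff {z j : Fin J} (j' : Fin J) (S : Finset (Fin J)) (hzj : z ≠ j) :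
    dmap j' S z = j ↔ (j' = j ∧ z ∉ S) := by
  rw [dmap]
  split_ifs with hm
  · simp [hzj, hm]
  · simp [hm]

lemma bracket
    (hJ : 2 ≤ J)
    (hpos : ∀ z : Fin J, 0 < P {x | x.2.2 = z})
    (hineqA : ∀ B : Fin J → Fin J → Set ℝ,
      (∀ j z, MeasurableSet (B j z)) →
      (∀ j : Fin J, ∀ z ≠ j, ∀ z' ≠ j, z ≠ z' → Disjoint (B j z) (B j z')) →
      (∀ j : Fin J, (⋃ z ∈ ({j}ᶜ : Set (Fin J)), B j z) = Set.univ) →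
      ∑ j : Fin J, ∑ z ∈ Finset.univ.erase j,
        P {x : ℝ × Fin J × Fin J | x.1 ∈ B j z ∧ x.2.1 = j ∧ x.2.2 = z}
          / P {x : ℝ × Fin J × Fin J | x.2.2 = z} ≤ 1)
    (hineqB : ∀ B : Set ℝ, MeasurableSet B → ∀ j k : Fin J, k ≠ j →
      P {x : ℝ × Fin J × Fin J | x.1 ∈ B ∧ x.2.1 = j ∧ x.2.2 = k}
          / P {x : ℝ × Fin J × Fin J | x.2.2 = k}
        ≤ P {x : ℝ × Fin J × Fin J | x.1 ∈ B ∧ x.2.1 = j ∧ x.2.2 = j}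
          / P {x : ℝ × Fin J × Fin J | x.2.2 = j})
    (j : Fin J) :
    (∑ j' ∈ univ.erase j, ∑ S ∈ (univ.erase j').powerset.filter (fun S => j ∈ S),
        (lam P j').withDensity (h P j' S) Set.univ) + wc P = rho P j Set.univ := by
  classical
  set X : ℝ≥0∞ := ∑ j' ∈ univ.erase j, ∑ S ∈ (univ.erase j').powerset.filter
    (fun S => j ∈ S), (lam P j').withDensity (h P j' S) Set.univ with hX
  set Yc : ℝ≥0∞ := (∑ j' ∈ univ.erase j, Q P j' j Set.univ) + Mz P j Set.univ with hYc
  have hYtop : Yc ≠ ∞ := by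
    rw [hYc]
    exact ENNReal.add_ne_top.mpr
      ⟨(ENNReal.sum_lt_top.mpr fun _ _ => measure_lt_top _ _).ne, measure_ne_top _ _⟩
  have h1 : (X + wc P) + Yc = 1 := by
    have hL3 : ∀ j' ∈ univ.erase j,
        Q P j' j Set.univ + ∑ S ∈ (univ.erase j').powerset.filter (fun S => j ∈ S),
          (lam P j').withDensity (h P j' S) Set.univ = Mz P j' Set.univ := by
      intro j' hj'
      exact L3 P j' j (Finset.mem_erase.mpr
        ⟨fun hc => (Finset.mem_erase.mp hj').1 hc.symm, Finset.mem_univ j⟩)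
    have hsum : ∑ j' ∈ univ.erase j, (Q P j' j Set.univ
        + ∑ S ∈ (univ.erase j').powerset.filter (fun S => j ∈ S),
          (lam P j').withDensity (h P j' S) Set.univ)
        = ∑ j' ∈ univ.erase j, Mz P j' Set.univ := Finset.sum_congr rfl hL3
    rw [Finset.sum_add_distrib] at hsum
    calc (X + wc P) + Yc
        = ((∑ j' ∈ univ.erase j, Q P j' j Set.univ) + X)
          + Mz P j Set.univ + wc P := by rw [hX, hYc]; ring
      _ = (∑ j' ∈ univ.erase j, Mz P j' Set.univ) + Mz P j Set.univ + wc P := by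
          rw [hsum]
      _ = (∑ j' : Fin J, Mz P j' Set.univ) + wc P := by
          rw [Finset.sum_erase_add _ _ (Finset.mem_univ j)]
      _ = 1 := by
          rw [wc]
          exact add_tsub_cancel_of_le (sumM_le_one P hJ hineqA)
  have h2 : rho P j Set.univ + Yc = 1 := by
    calc rho P j Set.univ + Yc
        = (∑ j' ∈ univ.erase j, Q P j' j Set.univ)
          + (Mz P j Set.univ + rho P j Set.univ) := by rw [hYc]; ring
      _ = (∑ j' ∈ univ.erase j, Q P j' j Set.univ) + Q P j j Set.univ := by
          rw [M_add_rho P hineqB j MeasurableSet.univ]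
      _ = ∑ j' : Fin J, Q P j' j Set.univ := by
          rw [Finset.sum_erase_add _ _ (Finset.mem_univ j)]
      _ = 1 := sum_Q_univ P hpos j
  have := h1.trans h2.symm
  exact (ENNReal.add_left_inj hYtop).mp this

lemma mu_cell
    (hJ : 2 ≤ J)
    (hpos : ∀ z : Fin J, 0 < P {x | x.2.2 = z})
    (hineqA : ∀ B : Fin J → Fin J → Set ℝ,
      (∀ j z, MeasurableSet (B j z)) →
      (∀ j : Fin J, ∀ z ≠ j, ∀ z' ≠ j, z ≠ z' → Disjoint (B j z) (B j z')) →
      (∀ j : Fin J, (⋃ z ∈ ({j}ᶜ : Set (Fin J)), B j z) = Set.univ) →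
      ∑ j : Fin J, ∑ z ∈ Finset.univ.erase j,
        P {x : ℝ × Fin J × Fin J | x.1 ∈ B j z ∧ x.2.1 = j ∧ x.2.2 = z}
          / P {x : ℝ × Fin J × Fin J | x.2.2 = z} ≤ 1)
    (hineqB : ∀ B : Set ℝ, MeasurableSet B → ∀ j k : Fin J, k ≠ j →
      P {x : ℝ × Fin J × Fin J | x.1 ∈ B ∧ x.2.1 = j ∧ x.2.2 = k}
          / P {x : ℝ × Fin J × Fin J | x.2.2 = k}
        ≤ P {x : ℝ × Fin J × Fin J | x.1 ∈ B ∧ x.2.1 = j ∧ x.2.2 = j}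
          / P {x : ℝ × Fin J × Fin J | x.2.2 = j})
    (j z : Fin J) {B : Set ℝ} (hB : MeasurableSet B) :
    mu P (((fun y : Fin J → ℝ => y j) ⁻¹' B) ×ˢ {d : Fin J → Fin J | d z = j})
      = Q P j z B := by
  classical
  set A := ((fun y : Fin J → ℝ => y j) ⁻¹' B) with hA
  set D := {d : Fin J → Fin J | d z = j} with hD
  have hterm : ∀ j' S, ((Ymeas P j' S).prod (Measure.dirac (dmap j' S))) (A ×ˢ D)
      = Ymeas P j' S A * (if dmap j' S z = j then 1 else 0) := by
    intro j' S
    rw [Measure.prod_prod, Measure.dirac_apply' _ (Set.to_countable D).measurableSet]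
    congr 1
    rw [Set.indicator_apply]
    by_cases hd : dmap j' S z = j
    · rw [if_pos (show dmap j' S ∈ D from hd), if_pos hd]
      rfl
    · rw [if_neg (show dmap j' S ∉ D from hd), if_neg hd]
  have hcterm : ((Cmeas P).prod (Measure.dirac id)) (A ×ˢ D)
      = Cmeas P A * (if z = j then 1 else 0) := by
    rw [Measure.prod_prod, Measure.dirac_apply' _ (Set.to_countable D).measurableSet]
    congr 1
    rw [Set.indicator_apply]
    by_cases hd : z = j
    · rw [if_pos (show id ∈ D from hd), if_pos hd]
      rfl
    · rw [if_neg (show id ∉ D from hd), if_neg hd]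
  rw [mu, Measure.add_apply, Measure.smul_apply, smul_eq_mul, Measure.finset_sum_apply]
  simp only [Measure.finset_sum_apply, hterm, hcterm]
  rcases eq_or_ne z j with rfl | hzj
  · -- case z = j
    rw [← Finset.add_sum_erase _ _ (Finset.mem_univ z)]
    have hmain : ∑ S ∈ (univ.erase z).powerset,
        Ymeas P z S A * (if dmap z S z = z then 1 else 0) = Mz P z B := by
      rw [← L1 P z hB]
      refine Finset.sum_congr rfl fun S hS => ?_
      rw [if_pos (dmap_self z S), mul_one, hA, Ymeas_eval_default]
    have hoth : ∀ j' ∈ univ.erase z,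
        ∑ S ∈ (univ.erase j').powerset, Ymeas P j' S A * (if dmap j' S z = z then 1 else 0)
          = R P z B * ∑ S ∈ (univ.erase j').powerset.filter (fun S => z ∈ S),
              (lam P j').withDensity (h P j' S) Set.univ := by
      intro j' hj'
      have hj'z : j' ≠ z := (Finset.mem_erase.mp hj').1
      rw [Finset.mul_sum, Finset.sum_filter]
      refine Finset.sum_congr rfl fun S hS => ?_
      by_cases hzS : z ∈ S
      · have hd : dmap j' S z = z := by rw [dmap, if_pos hzS]
        rw [if_pos hd, if_pos hzS, mul_one, hA,
          Ymeas_eval_other P j' S (Ne.symm hj'z) hzS B]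
      · have hd : dmap j' S z ≠ z := by rw [dmap, if_neg hzS]; exact hj'z
        rw [if_neg hd, if_neg hzS, mul_zero]
    rw [hmain, Finset.sum_congr rfl hoth, ← Finset.mul_sum, if_pos rfl, mul_one,
      hA, Cmeas_eval]
    calc Mz P z B + R P z B * (∑ j' ∈ univ.erase z,
          ∑ S ∈ (univ.erase j').powerset.filter (fun S => z ∈ S),
            (lam P j').withDensity (h P j' S) Set.univ) + wc P * R P z B
        = Mz P z B + R P z B * ((∑ j' ∈ univ.erase z,
            ∑ S ∈ (univ.erase j').powerset.filter (fun S => z ∈ S),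
              (lam P j').withDensity (h P j' S) Set.univ) + wc P) := by ring
      _ = Mz P z B + R P z B * rho P z Set.univ := by
          rw [bracket P hJ hpos hineqA hineqB z]
      _ = Mz P z B + rho P z B := by rw [R_mul_rho_univ]
      _ = Q P z z B := M_add_rho P hineqB z hB
  · -- case z ≠ j
    have hz : z ∈ univ.erase j := Finset.mem_erase.mpr ⟨hzj, Finset.mem_univ z⟩
    rw [if_neg hzj, mul_zero, mul_zero, add_zero]
    rw [Finset.sum_eq_single_of_mem j (Finset.mem_univ j) ?hzero]
    case hzero =>
      intro j' _ hj'
      apply Finset.sum_eq_zero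
      intro S hS
      rw [if_neg, mul_zero]
      rw [dmap_eq_iff j' S hzj]
      exact fun hcon => hj' hcon.1
    have hstep : ∀ S ∈ (univ.erase j).powerset,
        Ymeas P j S A * (if dmap j S z = j then 1 else 0)
          = if z ∉ S then (lam P j).withDensity (h P j S) B else 0 := by
      intro S hS
      by_cases hzS : z ∈ S
      · rw [if_neg (by rw [dmap_eq_iff j S hzj]; exact fun hcon => hcon.2 hzS),
          mul_zero, if_neg (by simpa using hzS)]
      · rw [if_pos (by rw [dmap_eq_iff j S hzj]; exact ⟨rfl, hzS⟩), mul_one,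
          if_pos hzS, hA, Ymeas_eval_default]
    rw [Finset.sum_congr rfl hstep, ← Finset.sum_filter, filter_powerset_not_mem,
      L2 P j z hz hB]

instance : IsProbabilityMeasure (Cmeas P) := by
  rw [Cmeas]
  infer_instance

lemma Ymeas_univ (j : Fin J) (S : Finset (Fin J)) :
    Ymeas P j S Set.univ = (lam P j).withDensity (h P j S) Set.univ := by
  simpa using Ymeas_eval_default P j S Set.univ

lemma isProb_mu
    (hJ : 2 ≤ J)
    (hineqA : ∀ B : Fin J → Fin J → Set ℝ,
      (∀ j z, MeasurableSet (B j z)) →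
      (∀ j : Fin J, ∀ z ≠ j, ∀ z' ≠ j, z ≠ z' → Disjoint (B j z) (B j z')) →
      (∀ j : Fin J, (⋃ z ∈ ({j}ᶜ : Set (Fin J)), B j z) = Set.univ) →
      ∑ j : Fin J, ∑ z ∈ Finset.univ.erase j,
        P {x : ℝ × Fin J × Fin J | x.1 ∈ B j z ∧ x.2.1 = j ∧ x.2.2 = z}
          / P {x : ℝ × Fin J × Fin J | x.2.2 = z} ≤ 1) :
    IsProbabilityMeasure (mu P) := by
  constructor
  have huniv : (Set.univ : Set ((Fin J → ℝ) × (Fin J → Fin J)))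
      = (Set.univ : Set (Fin J → ℝ)) ×ˢ (Set.univ : Set (Fin J → Fin J)) :=
    (Set.univ_prod_univ).symm
  rw [mu, Measure.add_apply, Measure.smul_apply, smul_eq_mul, huniv,
    Measure.finset_sum_apply]
  simp only [Measure.finset_sum_apply, Measure.prod_prod, measure_univ, mul_one,
    Ymeas_univ]
  rw [Finset.sum_congr rfl fun j _ => L1 P j MeasurableSet.univ, wc]
  exact add_tsub_cancel_of_le (sumM_le_one P hJ hineqA)

lemma mu_ae (hJ : 2 ≤ J) :
    ∀ᵐ yd ∂(mu P), ∃ jstar : Fin J, ∀ j, yd.2 j = j ∨ yd.2 j = jstar := by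
  classical
  rw [ae_iff]
  set Dbad := {d : Fin J → Fin J | ¬∃ jstar : Fin J, ∀ j, d j = j ∨ d j = jstar}
    with hDbad
  have hsub : {yd : (Fin J → ℝ) × (Fin J → Fin J)
        | ¬∃ jstar : Fin J, ∀ j, yd.2 j = j ∨ yd.2 j = jstar}
      ⊆ Set.univ ×ˢ Dbad := fun yd hyd => ⟨Set.mem_univ _, hyd⟩
  refine le_antisymm ?_ (zero_le)
  calc mu P {yd | ¬∃ jstar : Fin J, ∀ j, yd.2 j = j ∨ yd.2 j = jstar}
      ≤ mu P (Set.univ ×ˢ Dbad) := measure_mono hsub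
    _ = 0 := ?_
  have hdm : MeasurableSet Dbad := (Set.to_countable Dbad).measurableSet
  have hdmap : ∀ j S, dmap j S ∉ Dbad := by
    intro j S hmem
    exact hmem ⟨j, fun w => by
      rw [dmap]
      split_ifs
      · exact Or.inl rfl
      · exact Or.inr rfl⟩
  have hid : id ∉ Dbad := fun hmem => hmem ⟨⟨0, by omega⟩, fun w => Or.inl rfl⟩
  rw [mu, Measure.add_apply, Measure.smul_apply, smul_eq_mul,
    Measure.finset_sum_apply]
  simp only [Measure.finset_sum_apply, Measure.prod_prod,
    Measure.dirac_apply' _ hdm]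
  rw [Finset.sum_eq_zero, zero_add]
  · rw [Set.indicator_of_notMem hid, mul_zero, mul_zero]
  · intro j _
    apply Finset.sum_eq_zero
    intro S _
    rw [Set.indicator_of_notMem (hdmap j S), mul_zero]

end
end Stmt12

open Stmt12 in
/-- sufficiency direction of Theorem 3 of the paper (case J₀ = 0): any
observed-data distribution `P` of `(Y, D, Z)` satisfying the testable inequalities is
generated by a distribution of potential outcomes and potential treatments satisfying
the default-choice restriction, with the instrument exogenous. -/
theorem stmt_12 (J : ℕ) (hJ : 2 ≤ J)
    (P : Measure (ℝ × Fin J × Fin J)) [IsProbabilityMeasure P]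
    (hpos : ∀ z : Fin J, 0 < P {x | x.2.2 = z})
    (hineqA : ∀ B : Fin J → Fin J → Set ℝ,
      (∀ j z, MeasurableSet (B j z)) →
      (∀ j : Fin J, ∀ z ≠ j, ∀ z' ≠ j, z ≠ z' → Disjoint (B j z) (B j z')) →
      (∀ j : Fin J, (⋃ z ∈ ({j}ᶜ : Set (Fin J)), B j z) = Set.univ) →
      ∑ j : Fin J, ∑ z ∈ Finset.univ.erase j,
        P {x : ℝ × Fin J × Fin J | x.1 ∈ B j z ∧ x.2.1 = j ∧ x.2.2 = z}
          / P {x : ℝ × Fin J × Fin J | x.2.2 = z} ≤ 1)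
    (hineqB : ∀ B : Set ℝ, MeasurableSet B → ∀ j k : Fin J, k ≠ j →
      P {x : ℝ × Fin J × Fin J | x.1 ∈ B ∧ x.2.1 = j ∧ x.2.2 = k}
          / P {x : ℝ × Fin J × Fin J | x.2.2 = k}
        ≤ P {x : ℝ × Fin J × Fin J | x.1 ∈ B ∧ x.2.1 = j ∧ x.2.2 = j}
          / P {x : ℝ × Fin J × Fin J | x.2.2 = j}) :
    ∃ μ : Measure ((Fin J → ℝ) × (Fin J → Fin J)),
      IsProbabilityMeasure μ ∧
      (∀ᵐ yd ∂μ, ∃ jstar : Fin J, ∀ j, yd.2 j = j ∨ yd.2 j = jstar) ∧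
      Measure.map
        (fun x : ((Fin J → ℝ) × (Fin J → Fin J)) × Fin J =>
          (x.1.1 (x.1.2 x.2), x.1.2 x.2, x.2))
        (μ.prod (P.map (fun x => x.2.2))) = P := by
  classical
  refine ⟨mu P, isProb_mu P hJ hineqA, mu_ae P hJ, ?_⟩
  -- measurability of the observation map
  have houter1 : Measurable fun p : (Fin J → Fin J) × Fin J => p.1 p.2 :=
    measurable_from_prod_countable_left fun z => measurable_pi_apply z
  have m1 : Measurable fun x : ((Fin J → ℝ) × (Fin J → Fin J)) × Fin J =>
      x.1.2 x.2 := houter1.comp ((measurable_fst.snd).prodMk measurable_snd)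
  have houter2 : Measurable fun p : (Fin J → ℝ) × Fin J => p.1 p.2 :=
    measurable_from_prod_countable_left fun i => measurable_pi_apply i
  have m2 : Measurable fun x : ((Fin J → ℝ) × (Fin J → Fin J)) × Fin J =>
      x.1.1 (x.1.2 x.2) := houter2.comp ((measurable_fst.fst).prodMk m1)
  have mT : Measurable fun x : ((Fin J → ℝ) × (Fin J → Fin J)) × Fin J =>
      (x.1.1 (x.1.2 x.2), x.1.2 x.2, x.2) := m2.prodMk (m1.prodMk measurable_snd)
  have hmZ : Measurable fun x : ℝ × Fin J × Fin J => x.2.2 := measurable_snd.snd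
  haveI : IsFiniteMeasure (P.map fun x : ℝ × Fin J × Fin J => x.2.2) := by
    constructor
    rw [Measure.map_apply hmZ MeasurableSet.univ]
    exact measure_lt_top _ _
  refine Measure.ext fun A hA => ?_
  rw [Measure.map_apply mT hA]
  -- decompose A along the value of the discrete coordinates
  have hdecompP : A = ⋃ c ∈ (Finset.univ : Finset (Fin J × Fin J)),
      (A ∩ {x : ℝ × Fin J × Fin J | x.2 = c}) := by
    ext x
    simp
  have hmc : ∀ c : Fin J × Fin J,
      MeasurableSet (A ∩ {x : ℝ × Fin J × Fin J | x.2 = c}) := fun c =>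
    hA.inter (measurable_snd (measurableSet_singleton c))
  have hdisj : ((Finset.univ : Finset (Fin J × Fin J)) : Set (Fin J × Fin J)).PairwiseDisjoint
      (fun c => A ∩ {x : ℝ × Fin J × Fin J | x.2 = c}) := by
    intro a _ b _ hab
    rw [Function.onFun, Set.disjoint_left]
    rintro x ⟨-, ha⟩ ⟨-, hb⟩
    exact hab (ha ▸ hb ▸ rfl)
  have hP : P A = ∑ c : Fin J × Fin J, P (A ∩ {x | x.2 = c}) := by
    conv_lhs => rw [hdecompP]
    exact measure_biUnion_finset hdisj fun c _ => hmc c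
  have hL : ((mu P).prod (P.map fun x => x.2.2))
        ((fun x : ((Fin J → ℝ) × (Fin J → Fin J)) × Fin J =>
          (x.1.1 (x.1.2 x.2), x.1.2 x.2, x.2)) ⁻¹' A)
      = ∑ c : Fin J × Fin J, ((mu P).prod (P.map fun x => x.2.2))
          ((fun x : ((Fin J → ℝ) × (Fin J → Fin J)) × Fin J =>
            (x.1.1 (x.1.2 x.2), x.1.2 x.2, x.2)) ⁻¹' (A ∩ {x | x.2 = c})) := by
    conv_lhs => rw [hdecompP]
    rw [Set.preimage_iUnion₂]
    refine measure_biUnion_finset ?_ fun c _ => mT (hmc c)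
    intro a ha b hb hab
    exact Set.disjoint_left.mpr fun x hxa hxb =>
      Set.disjoint_left.mp (hdisj ha hb hab) hxa hxb
  rw [hL, hP]
  refine Finset.sum_congr rfl fun c _ => ?_
  -- the slice of A at (j, z) = c
  set Bc : Set ℝ := (fun v : ℝ => (v, c.1, c.2)) ⁻¹' A with hBc
  have hBcm : MeasurableSet Bc :=
    (measurable_id.prodMk measurable_const) hA
  have hsliceP : A ∩ {x : ℝ × Fin J × Fin J | x.2 = c}
      = {x : ℝ × Fin J × Fin J | x.1 ∈ Bc ∧ x.2.1 = c.1 ∧ x.2.2 = c.2} := by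
    ext ⟨v, d, w⟩
    simp only [Set.mem_inter_iff, Set.mem_setOf_eq, Prod.ext_iff, hBc,
      Set.mem_preimage]
    constructor
    · rintro ⟨hxA, h1, h2⟩
      subst h1; subst h2
      exact ⟨hxA, rfl, rfl⟩
    · rintro ⟨hxB, h1, h2⟩
      subst h1; subst h2
      exact ⟨hxB, rfl, rfl⟩
  have hsliceT : (fun x : ((Fin J → ℝ) × (Fin J → Fin J)) × Fin J =>
        (x.1.1 (x.1.2 x.2), x.1.2 x.2, x.2)) ⁻¹' (A ∩ {x | x.2 = c})
      = (((fun y : Fin J → ℝ => y c.1) ⁻¹' Bc)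
          ×ˢ {d : Fin J → Fin J | d c.2 = c.1}) ×ˢ ({c.2} : Set (Fin J)) := by
    ext ⟨⟨y, d⟩, w⟩
    simp only [Set.mem_preimage, Set.mem_inter_iff, Set.mem_setOf_eq, Set.mem_prod,
      Prod.ext_iff, hBc, Set.mem_singleton_iff]
    constructor
    · rintro ⟨hxA, h1, h2⟩
      subst h2
      rw [h1] at hxA
      exact ⟨⟨hxA, h1⟩, rfl⟩
    · rintro ⟨⟨hxB, h1⟩, h2⟩
      subst h2
      rw [h1]
      exact ⟨hxB, rfl, rfl⟩
  rw [hsliceT, hsliceP, Measure.prod_prod,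
    mu_cell P hJ hpos hineqA hineqB c.1 c.2 hBcm,
    Measure.map_apply hmZ (measurableSet_singleton c.2)]
  have hnu2 : P ((fun x : ℝ × Fin J × Fin J => x.2.2) ⁻¹' {c.2}) = nu P c.2 := rfl
  rw [hnu2, Q_apply P c.1 c.2 hBcm, div_eq_mul_inv, mul_assoc,
    ENNReal.inv_mul_cancel (show nu P c.2 ≠ 0 from (hpos c.2).ne')
      (measure_ne_top _ _), mul_one]
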